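/- For every integer n ≥ 3, the positive co-degree Turán number of C₅ satisfies 2·⌊n/4⌋ ≤ co⁺ex(n, C₅) ≤ (2/3)·n. -/

import Mathlib

open Finset

/-- The co-degree of a vertex set `S` in the hypergraph with edge set `E`:
the number of edges containing `S`. -/
def coDeg {n : ℕ} (E : Finset (Finset (Fin n))) (S : Finset (Fin n)) : ℕ :=
  (E.filter (fun e => S ⊆ e)).card

/-- The minimum positive co-degree `δ⁺_{r-1}` of an `r`-graph on `Fin n` with edge set `E`:
the largest `k` such that every `(r-1)`-set of vertices contained in at least one edge is
contained in at least `k` edges (i.e. the minimum of the positive co-degrees). -/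
noncomputable def minPosCoDeg (r n : ℕ) (E : Finset (Finset (Fin n))) : ℕ :=
  sInf {d : ℕ | ∃ S : Finset (Fin n), S.card = r - 1 ∧ coDeg E S = d ∧ 0 < d}

/-- `E` contains a copy of `F`: an injection of the vertices of `F` mapping
edges of `F` to edges of `E`. -/
def Contains {α β : Type*} [DecidableEq α] [DecidableEq β]
    (F : Finset (Finset α)) (E : Finset (Finset β)) : Prop :=
  ∃ f : α → β, Function.Injective f ∧ ∀ e ∈ F, e.image f ∈ E

/-- The positive co-degree Turán number `co⁺ex_r(n, F)`: the maximum of the minimum positive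
co-degree over all `F`-free `r`-graphs on `n` vertices with at least one edge. -/
noncomputable def coPlusEx {α : Type*} [DecidableEq α] (r n : ℕ) (F : Finset (Finset α)) : ℕ :=
  sSup {d : ℕ | ∃ E : Finset (Finset (Fin n)),
    (∀ e ∈ E, e.card = r) ∧ E.Nonempty ∧ ¬ Contains F E ∧ minPosCoDeg r n E = d}


def K4minus : Finset (Finset (Fin 4)) := {{0,1,2}, {0,1,3}, {0,2,3}}

def K4 : Finset (Finset (Fin 4)) := {{0,1,2}, {0,1,3}, {0,2,3}, {1,2,3}}

def F5 : Finset (Finset (Fin 5)) := {{0,1,2}, {0,1,3}, {2,3,4}}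

def F32 : Finset (Finset (Fin 5)) := {{0,1,2}, {0,3,4}, {1,3,4}, {2,3,4}}

def Fano : Finset (Finset (Fin 7)) :=
  {{0,1,2}, {2,3,4}, {0,4,5}, {1,3,5}, {0,3,6}, {1,4,6}, {2,5,6}}

def F33 : Finset (Finset (Fin 6)) :=
  {{0,1,2}, {0,3,4}, {0,3,5}, {0,4,5}, {1,3,4}, {1,3,5}, {1,4,5}, {2,3,4}, {2,3,5}, {2,4,5}}

def C5 : Finset (Finset (Fin 5)) := {{0,1,2}, {1,2,3}, {2,3,4}, {0,3,4}, {0,1,4}}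

def C5minus : Finset (Finset (Fin 5)) := {{0,1,2}, {1,2,3}, {2,3,4}, {0,3,4}}

def K222 : Finset (Finset (Fin 6)) :=
  {{0,2,4}, {0,2,5}, {0,3,4}, {0,3,5}, {1,2,4}, {1,2,5}, {1,3,4}, {1,3,5}}

/-- `J k`: the 3-graph on `k+1` vertices whose edges are all triples containing the
distinguished vertex `0`. -/
def Jgraph (k : ℕ) : Finset (Finset (Fin (k+1))) :=
  (Finset.univ.powersetCard 3).filter (fun e => (0 : Fin (k+1)) ∈ e)

/-- `E` is (isomorphic to) the complete balanced `k`-partite 3-graph on `n` vertices: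
there is a partition of the vertices into `k` classes whose sizes differ by at most one,
such that the edges are exactly the triples of vertices in three pairwise distinct classes. -/
def IsCompleteBalancedMultipartite (n k : ℕ) (E : Finset (Finset (Fin n))) : Prop :=
  ∃ f : Fin n → Fin k,
    (∀ i j : Fin k, (Finset.univ.filter (fun v => f v = i)).card ≤
      (Finset.univ.filter (fun v => f v = j)).card + 1) ∧
    ∀ e : Finset (Fin n), e ∈ E ↔ (e.card = 3 ∧ (e.image f).card = 3)

/-- The unique (6,3,2)-design `H₆`. -/
def H6 : Finset (Finset (Fin 6)) :=
  {{0,1,2}, {0,1,3}, {2,3,4}, {2,3,5}, {0,4,5}, {1,4,5}, {0,2,4}, {0,3,5}, {1,2,5}, {1,3,4}}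

/-- `E` is (isomorphic to) a balanced blow-up of `H₆` on `n` vertices: the vertices are
partitioned into six classes of equal size, and the edges are exactly the triples whose
three vertices lie in classes forming an edge of `H₆`. -/
def IsBalancedH6Blowup (n : ℕ) (E : Finset (Finset (Fin n))) : Prop :=
  ∃ f : Fin n → Fin 6,
    (∀ i j : Fin 6, (Finset.univ.filter (fun v => f v = i)).card =
      (Finset.univ.filter (fun v => f v = j)).card) ∧
    ∀ e : Finset (Fin n), e ∈ E ↔ (e.card = 3 ∧ e.image f ∈ H6)

lemma inter_card_lower {n : ℕ} (A B : Finset (Fin n)) :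
    A.card + B.card ≤ (A ∩ B).card + n := by
  have h := Finset.card_union_add_card_inter A B
  have h2 : (A ∪ B).card ≤ n := by
    simpa using Finset.card_le_card (Finset.subset_univ (A ∪ B))
  omega

def Nbr {n : ℕ} (E : Finset (Finset (Fin n))) (a b : Fin n) : Finset (Fin n) :=
  univ.filter (fun v => v ≠ a ∧ v ≠ b ∧ ({a,b,v} : Finset (Fin n)) ∈ E)

lemma mem_Nbr {n : ℕ} {E : Finset (Finset (Fin n))} {a b v : Fin n} :
    v ∈ Nbr E a b ↔ v ≠ a ∧ v ≠ b ∧ ({a,b,v} : Finset (Fin n)) ∈ E := by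
  simp [Nbr]

lemma coDeg_le_card_Nbr {n : ℕ} {E : Finset (Finset (Fin n))}
    (hE : ∀ e ∈ E, e.card = 3) {a b : Fin n} (hab : a ≠ b) :
    coDeg E {a,b} ≤ (Nbr E a b).card := by
  have hsub : E.filter (fun e => ({a,b} : Finset (Fin n)) ⊆ e)
      ⊆ (Nbr E a b).image (fun v => ({a,b,v} : Finset (Fin n))) := by
    intro e he
    rw [mem_filter] at he
    obtain ⟨heE, habe⟩ := he
    have hc3 : e.card = 3 := hE e heE
    have hc2 : ({a,b} : Finset (Fin n)).card = 2 := card_pair hab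
    have hsd : (e \ {a,b}).card = 1 := by
      rw [card_sdiff_of_subset habe, hc3, hc2]
    obtain ⟨v, hv⟩ := card_eq_one.mp hsd
    have hee : e = {a,b,v} := by
      have := Finset.union_sdiff_of_subset habe
      rw [hv] at this
      rw [← this]
      ext x; simp [or_comm, or_assoc, or_left_comm]
    have hvm : v ∈ e \ ({a,b} : Finset (Fin n)) := by rw [hv]; simp
    rw [mem_sdiff, mem_insert, mem_singleton] at hvm
    push_neg at hvm
    refine mem_image.mpr ⟨v, ?_, hee.symm⟩
    exact mem_Nbr.mpr ⟨hvm.2.1, hvm.2.2, hee ▸ heE⟩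
  calc coDeg E {a,b} ≤ ((Nbr E a b).image (fun v => ({a,b,v} : Finset (Fin n)))).card :=
        card_le_card hsub
    _ ≤ (Nbr E a b).card := card_image_le

lemma coDeg_pos {n : ℕ} {E : Finset (Finset (Fin n))} {e : Finset (Fin n)} {x y : Fin n}
    (heE : e ∈ E) (hx : x ∈ e) (hy : y ∈ e) :
    0 < coDeg E {x,y} := by
  refine card_pos.mpr ⟨e, mem_filter.mpr ⟨heE, ?_⟩⟩
  intro z hz
  rw [mem_insert, mem_singleton] at hz
  rcases hz with rfl | rfl <;> assumption

lemma minPos_le_coDeg {n : ℕ} {E : Finset (Finset (Fin n))} {x y : Fin n}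
    (hxy : x ≠ y) (hpos : 0 < coDeg E {x,y}) :
    minPosCoDeg 3 n E ≤ coDeg E {x,y} :=
  Nat.sInf_le ⟨{x,y}, card_pair hxy, rfl, hpos⟩

lemma nbr_card_ge {n : ℕ} {E : Finset (Finset (Fin n))}
    (hE : ∀ e ∈ E, e.card = 3) {e : Finset (Fin n)} {x y : Fin n}
    (heE : e ∈ E) (hx : x ∈ e) (hy : y ∈ e) (hxy : x ≠ y) :
    minPosCoDeg 3 n E ≤ (Nbr E x y).card :=
  le_trans (minPos_le_coDeg hxy (coDeg_pos heE hx hy)) (coDeg_le_card_Nbr hE hxy)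

lemma triple_inter {n : ℕ} (A B C : Finset (Fin n)) {d : ℕ} (h : 2 * n < 3 * d)
    (hA : d ≤ A.card) (hB : d ≤ B.card) (hC : d ≤ C.card) :
    ∃ v, v ∈ A ∧ v ∈ B ∧ v ∈ C := by
  have h1 := inter_card_lower A B
  have h2 := inter_card_lower (A ∩ B) C
  have h3 : 0 < (A ∩ B ∩ C).card := by omega
  obtain ⟨v, hv⟩ := card_pos.mp h3
  rw [mem_inter, mem_inter] at hv
  exact ⟨v, hv.1.1, hv.1.2, hv.2⟩

set_option maxHeartbeats 2000000 in
lemma upper_main {n : ℕ} {E : Finset (Finset (Fin n))}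
    (hE : ∀ e ∈ E, e.card = 3) (hne : E.Nonempty) (hfree : ¬ Contains C5 E) :
    3 * minPosCoDeg 3 n E ≤ 2 * n := by
  by_contra hcon
  push_neg at hcon
  set dd := minPosCoDeg 3 n E with hdd
  obtain ⟨e₀, he₀⟩ := hne
  obtain ⟨a, b, c, hab, hac, hbc, he₀abc⟩ := Finset.card_eq_three.mp (hE e₀ he₀)
  subst he₀abc
  have ha : a ∈ ({a,b,c} : Finset (Fin n)) := by simp
  have hb : b ∈ ({a,b,c} : Finset (Fin n)) := by simp
  have hc : c ∈ ({a,b,c} : Finset (Fin n)) := by simp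
  -- first vertex d'
  obtain ⟨d', hd1, hd2, hd3⟩ := triple_inter (Nbr E a b) (Nbr E a c) (Nbr E b c) hcon
    (nbr_card_ge hE he₀ ha hb hab) (nbr_card_ge hE he₀ ha hc hac)
    (nbr_card_ge hE he₀ hb hc hbc)
  obtain ⟨hd'a, hd'b, habd⟩ := mem_Nbr.mp hd1
  obtain ⟨_, hd'c, hacd⟩ := mem_Nbr.mp hd2
  obtain ⟨_, _, hbcd⟩ := mem_Nbr.mp hd3
  -- pair (c,d') is positive, via edge {a,c,d'}
  have hcd' : c ≠ d' := hd'c.symm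
  have hcNbr : dd ≤ (Nbr E c d').card := by
    refine nbr_card_ge hE hacd ?_ ?_ hcd' <;> simp
  obtain ⟨e', he1, he2, he3⟩ := triple_inter (Nbr E a b) (Nbr E a c) (Nbr E c d') hcon
    (nbr_card_ge hE he₀ ha hb hab) (nbr_card_ge hE he₀ ha hc hac) hcNbr
  obtain ⟨he'a, he'b, habe⟩ := mem_Nbr.mp he1
  obtain ⟨_, he'c, hace⟩ := mem_Nbr.mp he2
  obtain ⟨_, he'd, hcde⟩ := mem_Nbr.mp he3
  -- build the copy of C5: cycle (b, a, e', c, d')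
  apply hfree
  refine ⟨![b, a, e', c, d'], ?_, ?_⟩
  · intro i j hij
    fin_cases i <;> fin_cases j <;> simp_all <;> first
      | rfl
      | (exfalso; simp_all [eq_comm])
  · have memeq : ∀ w w' : Finset (Fin n), w' ∈ E → w = w' → w ∈ E := by
      intro w w' h hw; rwa [hw]
    have h1 : ({b,a,e'} : Finset (Fin n)) ∈ E := memeq _ _ habe (by ext x; simp; tauto)
    have h2 : ({a,e',c} : Finset (Fin n)) ∈ E := memeq _ _ hace (by ext x; simp; tauto)
    have h3 : ({e',c,d'} : Finset (Fin n)) ∈ E := memeq _ _ hcde (by ext x; simp; tauto)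
    have h5 : ({b,a,d'} : Finset (Fin n)) ∈ E := memeq _ _ habd (by ext x; simp; tauto)
    intro e he
    simp only [C5, Finset.mem_insert, Finset.mem_singleton] at he
    rcases he with rfl | rfl | rfl | rfl | rfl <;>
      simp only [Finset.image_insert, Finset.image_singleton, Matrix.cons_val_zero,
        Matrix.cons_val_one, Matrix.head_cons, Matrix.cons_val_two, Matrix.tail_cons,
        Matrix.cons_val_three, Matrix.cons_val_four] <;>
      first | exact h1 | exact h2 | exact h3 | exact hbcd | exact h5

def gfun (n : ℕ) : Fin n → Fin 4 := fun v => ⟨v.val % 4, Nat.mod_lt _ (by norm_num)⟩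

def EC (n : ℕ) : Finset (Finset (Fin n)) :=
  (univ.powersetCard 3).filter (fun e => (e.image (gfun n)).card = 3)

lemma EC_mem {n : ℕ} {e : Finset (Fin n)} :
    e ∈ EC n ↔ e.card = 3 ∧ (e.image (gfun n)).card = 3 := by
  simp [EC, Finset.mem_powersetCard_univ]

lemma EC_card3 {n : ℕ} : ∀ e ∈ EC n, e.card = 3 := fun e he => (EC_mem.mp he).1

lemma class_card {n : ℕ} (hn : 0 < n) (k : Fin 4) :
    n / 4 ≤ (univ.filter (fun v => gfun n v = k)).card := by
  have hk : k.val < 4 := k.isLt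
  calc n / 4 = (range (n / 4)).card := (card_range _).symm
    _ ≤ _ := ?_
  apply card_le_card_of_injOn (fun m => (⟨(4 * m + k.val) % n, Nat.mod_lt _ hn⟩ : Fin n))
  · intro m hm
    rw [mem_coe, mem_range] at hm
    have hlt : 4 * m + k.val < n := by omega
    simp only [mem_coe, mem_filter, mem_univ, true_and]
    apply Fin.ext
    show ((4 * m + k.val) % n) % 4 = k.val
    rw [Nat.mod_eq_of_lt hlt]
    omega
  · intro m hm m' hm' hmm
    rw [mem_coe, mem_range] at hm hm'
    have h1 : 4 * m + k.val < n := by omega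
    have h2 : 4 * m' + k.val < n := by omega
    have := Fin.mk.injEq _ _ _ _ ▸ hmm
    have hval : (4 * m + k.val) % n = (4 * m' + k.val) % n := congrArg Fin.val hmm
    rw [Nat.mod_eq_of_lt h1, Nat.mod_eq_of_lt h2] at hval
    omega

lemma filter_two_ge {n : ℕ} (hn : 0 < n) {i j : Fin 4} (hij : i ≠ j) :
    2 * (n / 4) ≤ (univ.filter (fun v => gfun n v ≠ i ∧ gfun n v ≠ j)).card := by
  have hex : ∀ i j : Fin 4, i ≠ j → ∃ k l : Fin 4,
      k ≠ l ∧ k ≠ i ∧ k ≠ j ∧ l ≠ i ∧ l ≠ j := by decide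
  obtain ⟨k, l, hkl, hki, hkj, hli, hlj⟩ := hex i j hij
  have hsub : (univ.filter (fun v => gfun n v = k)) ∪ (univ.filter (fun v => gfun n v = l))
      ⊆ univ.filter (fun v => gfun n v ≠ i ∧ gfun n v ≠ j) := by
    intro v hv
    rw [mem_union, mem_filter, mem_filter] at hv
    rw [mem_filter]
    rcases hv with ⟨_, rfl⟩ | ⟨_, rfl⟩ <;> exact ⟨mem_univ v, by assumption, by assumption⟩
  have hdis : Disjoint (univ.filter (fun v => gfun n v = k))
      (univ.filter (fun v => gfun n v = l)) := by
    rw [disjoint_filter]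
    rintro v _ rfl h
    exact hkl (h ▸ rfl)
  calc 2 * (n / 4) = n / 4 + n / 4 := by ring
    _ ≤ (univ.filter (fun v => gfun n v = k)).card +
        (univ.filter (fun v => gfun n v = l)).card :=
      Nat.add_le_add (class_card hn k) (class_card hn l)
    _ = ((univ.filter (fun v => gfun n v = k)) ∪ (univ.filter (fun v => gfun n v = l))).card :=
      (card_union_of_disjoint hdis).symm
    _ ≤ _ := card_le_card hsub

lemma EC_free {n : ℕ} : ¬ Contains C5 (EC n) := by
  rintro ⟨f, hinj, hmap⟩
  have hcover : ∀ i j : Fin 5, i ≠ j → ∃ e ∈ C5, i ∈ e ∧ j ∈ e := by decide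
  have hC5card : ∀ e ∈ C5, e.card = 3 := by decide
  obtain ⟨i, j, hij, hgij⟩ := Fintype.exists_ne_map_eq_of_card_lt
    (gfun n ∘ f) (by simp)
  obtain ⟨e, he, hie, hje⟩ := hcover i j hij
  have hmem := EC_mem.mp (hmap e he)
  have hcard : (e.image f).card = e.card := card_image_of_injective e hinj
  have him : ((e.image f).image (gfun n)).card = (e.image f).card := by
    rw [Finset.image_image] at hmem ⊢
    rw [hmem.2, hcard, hC5card e he]
  have hinjOn := Finset.card_image_iff.mp him
  have hfi : f i ∈ (e.image f : Finset (Fin n)) := mem_image_of_mem f hie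
  have hfj : f j ∈ (e.image f : Finset (Fin n)) := mem_image_of_mem f hje
  exact hij (hinj (hinjOn hfi hfj hgij))

lemma gfun_ne {n : ℕ} {v w : Fin n} (h : v.val % 4 ≠ w.val % 4) : gfun n v ≠ gfun n w := by
  intro hh
  exact h (congrArg Fin.val hh)

lemma EC_edge_mem {n : ℕ} {a b v : Fin n} (hab : a ≠ b)
    (hga : gfun n v ≠ gfun n a) (hgb : gfun n v ≠ gfun n b) (hgab : gfun n a ≠ gfun n b) :
    ({a, b, v} : Finset (Fin n)) ∈ EC n := by
  have hva : v ≠ a := fun h => hga (by rw [h])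
  have hvb : v ≠ b := fun h => hgb (by rw [h])
  rw [EC_mem]
  constructor
  · exact card_eq_three.mpr ⟨a, b, v, hab, hva.symm, hvb.symm, rfl⟩
  · rw [Finset.image_insert, Finset.image_insert, Finset.image_singleton]
    exact card_eq_three.mpr ⟨_, _, _, hgab, hga.symm, hgb.symm, rfl⟩

lemma EC_nonempty {n : ℕ} (hn : 3 ≤ n) : (EC n).Nonempty := by
  refine ⟨{⟨0, by omega⟩, ⟨1, by omega⟩, ⟨2, by omega⟩}, ?_⟩
  have h01 : (⟨0, by omega⟩ : Fin n) ≠ ⟨1, by omega⟩ := by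
    intro h; have := congrArg Fin.val h; simp at this
  apply EC_edge_mem h01 <;> apply gfun_ne <;> simp

lemma EC_pair_pos {n : ℕ} (hn : 3 ≤ n) :
    0 < coDeg (EC n) {(⟨0, by omega⟩ : Fin n), ⟨1, by omega⟩} := by
  apply card_pos.mpr
  refine ⟨{⟨0, by omega⟩, ⟨1, by omega⟩, ⟨2, by omega⟩}, mem_filter.mpr ⟨?_, ?_⟩⟩
  · have h01 : (⟨0, by omega⟩ : Fin n) ≠ ⟨1, by omega⟩ := by
      intro h; have := congrArg Fin.val h; simp at this
    apply EC_edge_mem h01 <;> apply gfun_ne <;> simp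
  · intro x hx
    rw [mem_insert, mem_singleton] at hx
    rcases hx with rfl | rfl <;> simp

set_option maxHeartbeats 2000000 in
lemma EC_minPos {n : ℕ} (hn : 3 ≤ n) : 2 * (n / 4) ≤ minPosCoDeg 3 n (EC n) := by
  have hn0 : 0 < n := by omega
  apply le_csInf
  · refine ⟨coDeg (EC n) {(⟨0, by omega⟩ : Fin n), ⟨1, by omega⟩},
      {(⟨0, by omega⟩ : Fin n), ⟨1, by omega⟩}, ?_, rfl, EC_pair_pos hn⟩
    apply card_pair
    intro h; have := congrArg Fin.val h; simp at this
  · rintro d ⟨S, hS2, rfl, hdpos⟩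
    obtain ⟨a, b, hab, rfl⟩ := card_eq_two.mp hS2
    obtain ⟨e, he⟩ := card_pos.mp hdpos
    rw [mem_filter] at he
    obtain ⟨heE, habe⟩ := he
    obtain ⟨hec, heim⟩ := EC_mem.mp heE
    have hinjOn : Set.InjOn (gfun n) (e : Set (Fin n)) := by
      apply Finset.card_image_iff.mp
      rw [heim, hec]
    have hgab : gfun n a ≠ gfun n b := by
      intro h
      exact hab (hinjOn (habe (by simp)) (habe (by simp)) h)
    set T := univ.filter (fun v => gfun n v ≠ gfun n a ∧ gfun n v ≠ gfun n b) with hT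
    have himg : T.image (fun v => ({a, b, v} : Finset (Fin n)))
        ⊆ (EC n).filter (fun e => ({a, b} : Finset (Fin n)) ⊆ e) := by
      intro w hw
      rw [mem_image] at hw
      obtain ⟨v, hv, rfl⟩ := hw
      rw [hT, mem_filter] at hv
      refine mem_filter.mpr ⟨EC_edge_mem hab hv.2.1 hv.2.2 hgab, ?_⟩
      intro x hx
      rw [mem_insert, mem_singleton] at hx
      rcases hx with rfl | rfl <;> simp
    have hinj2 : Set.InjOn (fun v => ({a, b, v} : Finset (Fin n))) T := by
      intro v hv v' hv' hvv
      rw [hT, coe_filter] at hv hv'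
      simp only [Set.mem_setOf_eq] at hv hv'
      have hva : v ≠ a := fun h => hv.2.1 (by rw [h])
      have hvb : v ≠ b := fun h => hv.2.2 (by rw [h])
      have hvv' : ({a, b, v} : Finset (Fin n)) = {a, b, v'} := hvv
      have : v ∈ ({a, b, v'} : Finset (Fin n)) := by rw [← hvv']; simp
      rw [mem_insert, mem_insert, mem_singleton] at this
      tauto
    calc 2 * (n / 4) ≤ T.card := filter_two_ge hn0 hgab
      _ = (T.image (fun v => ({a, b, v} : Finset (Fin n)))).card :=
        (card_image_of_injOn hinj2).symm
      _ ≤ coDeg (EC n) {a, b} := card_le_card himg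

/-- For every `n ≥ 3`, `2·⌊n/4⌋ ≤ co⁺ex(n, C₅) ≤ (2/3)·n`. -/
theorem coPlusEx_C5 (n : ℕ) (hn : 3 ≤ n) :
    2 * (n / 4) ≤ coPlusEx 3 n C5 ∧ (coPlusEx 3 n C5 : ℝ) ≤ 2 / 3 * n := by
  have hS : coPlusEx 3 n C5 = sSup {d : ℕ | ∃ E : Finset (Finset (Fin n)),
      (∀ e ∈ E, e.card = 3) ∧ E.Nonempty ∧ ¬ Contains C5 E ∧ minPosCoDeg 3 n E = d} := rfl
  set Sset := {d : ℕ | ∃ E : Finset (Finset (Fin n)),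
      (∀ e ∈ E, e.card = 3) ∧ E.Nonempty ∧ ¬ Contains C5 E ∧ minPosCoDeg 3 n E = d} with hSset
  have hmem : minPosCoDeg 3 n (EC n) ∈ Sset :=
    ⟨EC n, EC_card3, EC_nonempty hn, EC_free, rfl⟩
  have hbd : ∀ d ∈ Sset, 3 * d ≤ 2 * n := by
    rintro d ⟨E, h1, h2, h3, rfl⟩
    exact upper_main h1 h2 h3
  have hbdd : BddAbove Sset := ⟨n, fun d hd => by have := hbd d hd; omega⟩
  have hsup : sSup Sset ∈ Sset := Nat.sSup_mem ⟨_, hmem⟩ hbdd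
  rw [hS]
  constructor
  · exact le_trans (EC_minPos hn) (le_csSup hbdd hmem)
  · have h3 : 3 * sSup Sset ≤ 2 * n := hbd _ hsup
    have hR : (3 : ℝ) * ((sSup Sset : ℕ) : ℝ) ≤ 2 * (n : ℝ) := by exact_mod_cast h3
    linarith
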